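/- Let d be an odd prime and s, t ∈ Z_d. Define c_{j,r} = 1/d if r = s·j + t (in Z_d) and c_{j,r} = 0 otherwise, and set ρ = Σ_{j,r} c_{j,r} P̃_{j,r}. Then ρ is separable; moreover d·ρ is an orthogonal projection of rank d. -/

import Mathlib

open Matrix Kronecker
open scoped ComplexOrder

noncomputable def eta (d : ℕ) : ℂ := Complex.exp (2 * Real.pi * Complex.I / d)

noncomputable def Echar (d : ℕ) (x : ZMod d) : ℂ := eta d ^ x.val

lemma eta_pow_d (d : ℕ) [NeZero d] : eta d ^ d = 1 := by
  rw [eta, ← Complex.exp_nat_mul]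
  rw [mul_div_cancel₀ _ (by exact_mod_cast Nat.cast_ne_zero.mpr (NeZero.ne d) : (d:ℂ) ≠ 0)]
  exact Complex.exp_two_pi_mul_I

lemma eta_pow_mod (d : ℕ) [NeZero d] (a : ℕ) : eta d ^ a = eta d ^ (a % d) := by
  conv_lhs => rw [← Nat.div_add_mod a d, pow_add, pow_mul, eta_pow_d, one_pow, one_mul]

lemma Echar_add (d : ℕ) [NeZero d] (x y : ZMod d) :
    Echar d (x + y) = Echar d x * Echar d y := by
  rw [Echar, Echar, Echar, ← pow_add, ZMod.val_add, ← eta_pow_mod]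

lemma Echar_zero (d : ℕ) [NeZero d] : Echar d 0 = 1 := by
  simp [Echar, ZMod.val_zero]

lemma Echar_mul_neg (d : ℕ) [NeZero d] (x : ZMod d) :
    Echar d x * Echar d (-x) = 1 := by
  rw [← Echar_add, add_neg_cancel, Echar_zero]

lemma conj_eta (d : ℕ) : (starRingEnd ℂ) (eta d) = (eta d)⁻¹ := by
  rw [eta, ← Complex.exp_conj, ← Complex.exp_neg]
  congr 1
  simp [map_div₀, Complex.conj_I, Complex.conj_ofReal, map_ofNat]
  ring

lemma Echar_conj (d : ℕ) [NeZero d] (x : ZMod d) :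
    (starRingEnd ℂ) (Echar d x) = Echar d (-x) := by
  rw [Echar, map_pow, conj_eta, inv_pow]
  refine inv_eq_of_mul_eq_one_left ?_
  have := Echar_mul_neg d (-x)
  rw [neg_neg] at this
  simpa [Echar] using this

lemma Echar_ne_one (d : ℕ) [NeZero d] {c : ZMod d} (hc : c ≠ 0) : Echar d c ≠ 1 := by
  intro h
  have hprim : IsPrimitiveRoot (eta d) d := Complex.isPrimitiveRoot_exp d (NeZero.ne d)
  have hdvd : d ∣ c.val := (IsPrimitiveRoot.pow_eq_one_iff_dvd hprim c.val).mp h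
  have hlt : c.val < d := ZMod.val_lt c
  have h0 : c.val = 0 := Nat.eq_zero_of_dvd_of_lt hdvd hlt
  exact hc (by rwa [ZMod.val_eq_zero] at h0)

lemma Echar_sum (d : ℕ) [NeZero d] (c : ZMod d) :
    ∑ m : ZMod d, Echar d (c * m) = if c = 0 then (d : ℂ) else 0 := by
  by_cases hc : c = 0
  · simp [hc, Echar_zero, Finset.card_univ, ZMod.card]
  · rw [if_neg hc]
    have key : Echar d c * ∑ m : ZMod d, Echar d (c * m)
        = ∑ m : ZMod d, Echar d (c * m) := by
      rw [Finset.mul_sum]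
      refine Fintype.sum_equiv (Equiv.addRight (1 : ZMod d)) _ _ fun m => ?_
      rw [Equiv.coe_addRight, mul_add, mul_one, Echar_add, mul_comm]
    have h2 : (Echar d c - 1) * ∑ m : ZMod d, Echar d (c * m) = 0 := by
      rw [sub_mul, one_mul, key, sub_self]
    rcases mul_eq_zero.mp h2 with h | h
    · exact absurd (sub_eq_zero.mp h) (Echar_ne_one d hc)
    · exact h

noncomputable def Omega (d : ℕ) (j k : ZMod d) : ZMod d × ZMod d → ℂ :=
  fun uv => if uv.2 = uv.1 + k then eta d ^ (j.val * uv.1.val) else 0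

lemma Omega_eq (d : ℕ) [NeZero d] (j k : ZMod d) (mn : ZMod d × ZMod d) :
    Omega d j k mn = if mn.2 = mn.1 + k then Echar d (j * mn.1) else 0 := by
  unfold Omega Echar
  rw [ZMod.val_mul, ← eta_pow_mod]

lemma pure_posSemidef {ι : Type*} [Fintype ι] [DecidableEq ι] (v : ι → ℂ) :
    (Matrix.vecMulVec v (star v)).PosSemidef := by
  refine Matrix.PosSemidef.of_dotProduct_mulVec_nonneg ?_ ?_
  · ext i j
    simp [Matrix.conjTranspose_apply, Matrix.vecMulVec_apply, mul_comm]
  · intro x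
    have : (star x) ⬝ᵥ (Matrix.vecMulVec v (star v)).mulVec x
        = (star x ⬝ᵥ v) * (star v ⬝ᵥ x) := by
      simp only [dotProduct, Matrix.mulVec, Matrix.vecMulVec_apply, Finset.mul_sum,
        Finset.sum_mul, Pi.star_apply]
      rw [Finset.sum_comm]
      exact Finset.sum_congr rfl fun i _ => Finset.sum_congr rfl fun j _ => by ring
    rw [this]
    have hconj : (star x ⬝ᵥ v) = (starRingEnd ℂ) (star v ⬝ᵥ x) := by
      simp [dotProduct, map_sum, mul_comm]
    rw [hconj, mul_comm, Complex.mul_conj]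
    exact_mod_cast Complex.normSq_nonneg _

lemma pure_trace {ι : Type*} [Fintype ι] [DecidableEq ι] (v : ι → ℂ) :
    (Matrix.vecMulVec v (star v)).trace = ∑ i, v i * (starRingEnd ℂ) (v i) := by
  simp [Matrix.trace, Matrix.diag, Matrix.vecMulVec_apply]

def zmodEquiv (d : ℕ) [NeZero d] : Fin d ≃ ZMod d where
  toFun i := ((i : ℕ) : ZMod d)
  invFun x := ⟨x.val, ZMod.val_lt x⟩
  left_inv i := by
    ext
    simp [ZMod.val_cast_of_lt i.isLt]
  right_inv x := ZMod.natCast_rightInverse x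

lemma Omega_conj (d : ℕ) [NeZero d] (j k : ZMod d) (mn : ZMod d × ZMod d) :
    star (Omega d j k mn) = if mn.2 = mn.1 + k then Echar d (-(j * mn.1)) else 0 := by
  rw [Omega_eq]
  split <;> simp [Complex.star_def, Echar_conj]

noncomputable def Ptilde (d : ℕ) (j k : ZMod d) :
    Matrix (ZMod d × ZMod d) (ZMod d × ZMod d) ℂ :=
  (d : ℂ)⁻¹ • Matrix.vecMulVec (Omega d j k) (star (Omega d j k))

def IsSeparableState {d : ℕ} [NeZero d]
    (ρ : Matrix (ZMod d × ZMod d) (ZMod d × ZMod d) ℂ) : Prop :=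
  ∃ (n : ℕ) (w : Fin n → ℝ) (σ τ : Fin n → Matrix (ZMod d) (ZMod d) ℂ),
    (∀ i, 0 ≤ w i) ∧ (∑ i, w i = 1) ∧
    (∀ i, (σ i).PosSemidef ∧ (σ i).trace = 1) ∧
    (∀ i, (τ i).PosSemidef ∧ (τ i).trace = 1) ∧
    ρ = ∑ i, (w i : ℂ) • (σ i ⊗ₖ τ i)

/-- For `d` an odd prime and `s, t ∈ Z_d`, with
`c_{j,r} = 1/d` if `r = s·j + t` and `0` otherwise, the state
`ρ = Σ_{j,r} c_{j,r} P̃_{j,r}` is separable, and `d·ρ` is an orthogonal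
projection of rank `d`. -/
theorem phase_space_line_state (d : ℕ) [NeZero d] (hd : d.Prime) (hodd : Odd d)
    (s t : ZMod d)
    (ρ : Matrix (ZMod d × ZMod d) (ZMod d × ZMod d) ℂ)
    (hρ : ρ = ∑ j : ZMod d, ∑ r : ZMod d,
        (if r = s * j + t then (d : ℂ)⁻¹ else 0) • Ptilde d j r) :
    IsSeparableState ρ ∧
    ((d : ℂ) • ρ) * ((d : ℂ) • ρ) = (d : ℂ) • ρ ∧
    ((d : ℂ) • ρ).IsHermitian ∧
    ((d : ℂ) • ρ).rank = d := by
  haveI : Fact d.Prime := ⟨hd⟩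
  have hd0 : (d : ℂ) ≠ 0 := Nat.cast_ne_zero.mpr (NeZero.ne d)
  have hent : ∀ x y : ZMod d × ZMod d, ρ x y =
      (d:ℂ)⁻¹ * (d:ℂ)⁻¹ * ∑ j : ZMod d,
        (if x.2 = x.1 + (s*j+t) then Echar d (j*x.1) else 0) *
        (if y.2 = y.1 + (s*j+t) then Echar d (-(j*y.1)) else 0) := by
    intro x y
    subst hρ
    simp only [Matrix.sum_apply, Matrix.smul_apply, Ptilde, Matrix.vecMulVec_apply,
      Pi.star_apply, smul_eq_mul, Omega_eq, Omega_conj, ite_mul, zero_mul,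
      Finset.sum_ite_eq', Finset.mem_univ, if_true]
    rw [Finset.mul_sum]
    refine Finset.sum_congr rfl fun j _ => ?_
    by_cases h1 : x.2 = x.1 + (s*j+t)
    · simp [h1, apply_ite star, Complex.star_def, Echar_conj, mul_assoc]
    · simp [h1]
  set cB : ℂ := (((Real.sqrt d)⁻¹ : ℝ) : ℂ) with hcB
  have hccB : cB * cB = (d:ℂ)⁻¹ := by
    rw [hcB, ← Complex.ofReal_mul, ← mul_inv, Real.mul_self_sqrt (Nat.cast_nonneg d)]
    push_cast
    ring
  have hstarcB : star cB = cB := by rw [hcB, Complex.star_def, Complex.conj_ofReal]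
  set B : Matrix (ZMod d × ZMod d) (ZMod d) ℂ :=
    Matrix.of (fun x j => cB * (if x.2 = x.1 + (s*j+t) then Echar d (j * x.1) else 0)) with hBdef
  have hBapp : ∀ (x : ZMod d × ZMod d) (j : ZMod d),
      B x j = cB * (if x.2 = x.1 + (s*j+t) then Echar d (j * x.1) else 0) := fun x j => rfl
  have hB : (d:ℂ) • ρ = B * Bᴴ := by
    ext x y
    rw [Matrix.smul_apply, hent x y, Matrix.mul_apply]
    have hterm : ∀ j : ZMod d, B x j * Bᴴ j y
        = (d:ℂ)⁻¹ * ((if x.2 = x.1 + (s*j+t) then Echar d (j*x.1) else 0) *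
            (if y.2 = y.1 + (s*j+t) then Echar d (-(j*y.1)) else 0)) := by
      intro j
      rw [Matrix.conjTranspose_apply, hBapp, hBapp, star_mul', hstarcB,
        show star (if y.2 = y.1 + (s*j+t) then Echar d (j*y.1) else 0)
          = (if y.2 = y.1 + (s*j+t) then Echar d (-(j*y.1)) else 0) from by
          split <;> simp [Complex.star_def, Echar_conj], ← hccB]
      ring
    rw [Finset.sum_congr rfl fun j _ => hterm j, ← Finset.mul_sum]
    rw [smul_eq_mul, ← mul_assoc, ← mul_assoc, mul_inv_cancel₀ hd0, one_mul]
  have hBH : Bᴴ * B = (1 : Matrix (ZMod d) (ZMod d) ℂ) := by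
    ext j j'
    rw [Matrix.mul_apply, Matrix.one_apply]
    have hterm : ∀ x : ZMod d × ZMod d, Bᴴ j x * B x j' =
        (d:ℂ)⁻¹ * ((if x.2 = x.1 + (s*j+t) then Echar d (-(j*x.1)) else 0) *
          (if x.2 = x.1 + (s*j'+t) then Echar d (j'*x.1) else 0)) := by
      intro x
      rw [Matrix.conjTranspose_apply, hBapp, hBapp, star_mul', hstarcB,
        show star (if x.2 = x.1 + (s*j+t) then Echar d (j*x.1) else 0)
          = (if x.2 = x.1 + (s*j+t) then Echar d (-(j*x.1)) else 0) from by
          split <;> simp [Complex.star_def, Echar_conj], ← hccB]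
      ring
    rw [Finset.sum_congr rfl fun x _ => hterm x, ← Finset.mul_sum, Fintype.sum_prod_type]
    have hinner : ∀ m : ZMod d, (∑ n : ZMod d,
        (if n = m+(s*j+t) then Echar d (-(j*m)) else 0) *
          (if n = m+(s*j'+t) then Echar d (j'*m) else 0))
        = if s*j' = s*j then Echar d (-(j*m)) * Echar d (j'*m) else 0 := by
      intro m
      simp only [ite_mul, zero_mul, Finset.sum_ite_eq', Finset.mem_univ, if_true,
        mul_ite, mul_zero, add_right_inj, add_left_inj]
    rw [Finset.sum_congr rfl fun m _ => hinner m]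
    by_cases hjj : j = j'
    · subst hjj
      have h1 : ∀ m : ZMod d, (if s*j = s*j then Echar d (-(j*m)) * Echar d (j*m) else 0) = 1 :=
        fun m => by rw [if_pos rfl, mul_comm]; exact Echar_mul_neg d _
      rw [Finset.sum_congr rfl fun m _ => h1 m, if_pos rfl]
      simp [Finset.card_univ, ZMod.card, inv_mul_cancel₀ hd0]
    · rw [if_neg hjj]
      by_cases hsj : s*j' = s*j
      · have h1 : ∀ m : ZMod d, (if s*j' = s*j then Echar d (-(j*m)) * Echar d (j'*m) else 0)
            = Echar d ((j'-j)*m) := fun m => by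
          rw [if_pos hsj, ← Echar_add]; congr 1; ring
        rw [Finset.sum_congr rfl fun m _ => h1 m, Echar_sum,
          if_neg (sub_ne_zero.mpr (Ne.symm hjj)), mul_zero]
      · simp [hsj]
  refine ⟨?_, ?_, ?_, ?_⟩
  · -- separability
    have hdR0 : (d:ℝ) ≠ 0 := Nat.cast_ne_zero.mpr (NeZero.ne d)
    have hwnn : ∀ _i : Fin d, (0:ℝ) ≤ (d:ℝ)⁻¹ := fun _ => by positivity
    have hwsum : ∑ _i : Fin d, ((d:ℝ)⁻¹) = 1 := by
      simp only [Finset.sum_const, Finset.card_univ, Fintype.card_fin, nsmul_eq_mul]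
      exact mul_inv_cancel₀ hdR0
    by_cases hs : s = 0
    · -- diagonal case
      subst hs
      set ind : ZMod d → (ZMod d → ℂ) := fun a m => if m = a then 1 else 0 with hind
      refine ⟨d, fun _ => (d:ℝ)⁻¹,
        fun i => Matrix.vecMulVec (ind ((i:ℕ):ZMod d)) (star (ind ((i:ℕ):ZMod d))),
        fun i => Matrix.vecMulVec (ind (((i:ℕ):ZMod d)+t)) (star (ind (((i:ℕ):ZMod d)+t))),
        hwnn, hwsum, ?_, ?_, ?_⟩
      · intro i
        refine ⟨pure_posSemidef _, ?_⟩
        rw [pure_trace]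
        simp [hind, apply_ite (starRingEnd ℂ), Finset.sum_ite_eq', ite_mul, zero_mul]
      · intro i
        refine ⟨pure_posSemidef _, ?_⟩
        rw [pure_trace]
        simp [hind, apply_ite (starRingEnd ℂ), Finset.sum_ite_eq', ite_mul, zero_mul]
      · rw [show (∑ i : Fin d, ((((d:ℝ)⁻¹):ℝ):ℂ) •
            (Matrix.vecMulVec (ind ((i:ℕ):ZMod d)) (star (ind ((i:ℕ):ZMod d))) ⊗ₖ
              Matrix.vecMulVec (ind (((i:ℕ):ZMod d)+t)) (star (ind (((i:ℕ):ZMod d)+t)))))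
            = ∑ a : ZMod d, ((((d:ℝ)⁻¹):ℝ):ℂ) •
            (Matrix.vecMulVec (ind a) (star (ind a)) ⊗ₖ
              Matrix.vecMulVec (ind (a+t)) (star (ind (a+t)))) from
          Fintype.sum_equiv (zmodEquiv d) _ _ (fun i => rfl)]
        ext x y
        rw [hent x y, Matrix.sum_apply]
        have hRHS : ∀ a : ZMod d, (((((d:ℝ)⁻¹):ℝ):ℂ) •
            (Matrix.vecMulVec (ind a) (star (ind a)) ⊗ₖ
              Matrix.vecMulVec (ind (a+t)) (star (ind (a+t))))) x y
            = (d:ℂ)⁻¹ * ((if x.1 = a then 1 else 0) * (if y.1 = a then 1 else 0) *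
                ((if x.2 = a+t then 1 else 0) * (if y.2 = a+t then 1 else 0))) := by
          intro a
          simp [hind, Matrix.kroneckerMap_apply, Matrix.vecMulVec_apply,
            apply_ite (starRingEnd ℂ), Complex.star_def]
        rw [Finset.sum_congr rfl fun a _ => hRHS a, ← Finset.mul_sum]
        have hcollapse : (∑ a : ZMod d, (if x.1 = a then (1:ℂ) else 0) * (if y.1 = a then 1 else 0) *
            ((if x.2 = a+t then 1 else 0) * (if y.2 = a+t then 1 else 0)))
            = (if y.1 = x.1 then 1 else 0) * ((if x.2 = x.1+t then 1 else 0) * (if y.2 = x.1+t then 1 else 0)) := by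
          rw [Finset.sum_eq_single x.1 (fun b _ hb => by
            simp [show x.1 ≠ b from fun h => hb h.symm]) (by simp)]
          simp
        rw [hcollapse]
        have hLHS : (∑ j : ZMod d,
            (if x.2 = x.1 + (0*j+t) then Echar d (j*x.1) else 0) *
            (if y.2 = y.1 + (0*j+t) then Echar d (-(j*y.1)) else 0))
            = (if x.2 = x.1 + t then 1 else 0) * (if y.2 = y.1 + t then 1 else 0) *
              (if x.1 - y.1 = 0 then (d:ℂ) else 0) := by
          by_cases h1 : x.2 = x.1 + t
          · by_cases h2 : y.2 = y.1 + t
            · simp only [zero_mul, zero_add, if_pos h1, if_pos h2, one_mul]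
              rw [← Echar_sum d (x.1 - y.1)]
              refine Finset.sum_congr rfl fun j _ => ?_
              rw [← Echar_add]
              congr 1
              ring
            · simp [zero_mul, zero_add, h2]
          · simp [zero_mul, zero_add, h1]
        rw [hLHS]
        by_cases h3 : y.1 = x.1
        · rw [h3, sub_self]
          simp only [eq_self_iff_true, if_true]
          split_ifs <;> field_simp
        · have hne : x.1 - y.1 ≠ 0 := sub_ne_zero.mpr (fun h => h3 h.symm)
          rw [if_neg hne, if_neg h3]
          simp
    · -- s ≠ 0 : quadratic-phase product states
      have h2ne : (2 : ZMod d) ≠ 0 := by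
        intro h
        have h2' : ((2:ℕ) : ZMod d) = 0 := by exact_mod_cast h
        have hdvd : d ∣ 2 := (ZMod.natCast_eq_zero_iff 2 d).mp h2'
        have hd2 : d = 2 := (Nat.prime_dvd_prime_iff_eq hd Nat.prime_two).mp hdvd
        rw [hd2] at hodd
        exact (by decide : ¬ Odd 2) hodd
      set β : ZMod d := -((2:ZMod d)⁻¹ * s⁻¹) with hβ
      set γ : ZMod d := -(s⁻¹ * t) with hγ
      set q : ZMod d := (2:ZMod d)⁻¹ * s⁻¹ with hq
      have hstarE : ∀ z : ZMod d, star (Echar d z) = Echar d (-z) := fun z => by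
        rw [Complex.star_def, Echar_conj]
      have htr : ∀ (f : ZMod d → ZMod d),
          (Matrix.vecMulVec (fun m => cB * Echar d (f m))
            (star (fun m => cB * Echar d (f m)))).trace = 1 := by
        intro f
        rw [pure_trace]
        have h1 : ∀ m : ZMod d,
            (cB * Echar d (f m)) * (starRingEnd ℂ) (cB * Echar d (f m)) = (d:ℂ)⁻¹ := by
          intro m
          rw [_root_.map_mul, show (starRingEnd ℂ) cB = cB from hstarcB, Echar_conj]
          calc cB * Echar d (f m) * (cB * Echar d (-(f m)))
              = (cB*cB) * (Echar d (f m) * Echar d (-(f m))) := by ring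
            _ = (d:ℂ)⁻¹ := by rw [hccB, Echar_mul_neg, mul_one]
        rw [Finset.sum_congr rfl fun m _ => h1 m]
        simp only [Finset.sum_const, Finset.card_univ, ZMod.card, nsmul_eq_mul]
        exact mul_inv_cancel₀ hd0
      refine ⟨d, fun _ => (d:ℝ)⁻¹,
        fun i => Matrix.vecMulVec
          (fun m => cB * Echar d (β*m*m + γ*m + ((i:ℕ):ZMod d)*m))
          (star (fun m => cB * Echar d (β*m*m + γ*m + ((i:ℕ):ZMod d)*m))),
        fun i => Matrix.vecMulVec
          (fun n => cB * Echar d (q*n*n - ((i:ℕ):ZMod d)*n))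
          (star (fun n => cB * Echar d (q*n*n - ((i:ℕ):ZMod d)*n))),
        hwnn, hwsum,
        fun i => ⟨pure_posSemidef _, htr _⟩, fun i => ⟨pure_posSemidef _, htr _⟩, ?_⟩
      rw [show (∑ i : Fin d, (((d:ℝ)⁻¹ : ℝ) : ℂ) •
          (Matrix.vecMulVec
            (fun m => cB * Echar d (β*m*m + γ*m + ((i:ℕ):ZMod d)*m))
            (star (fun m => cB * Echar d (β*m*m + γ*m + ((i:ℕ):ZMod d)*m))) ⊗ₖ
           Matrix.vecMulVec
            (fun n => cB * Echar d (q*n*n - ((i:ℕ):ZMod d)*n))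
            (star (fun n => cB * Echar d (q*n*n - ((i:ℕ):ZMod d)*n)))))
          = ∑ a : ZMod d, (((d:ℝ)⁻¹ : ℝ) : ℂ) •
          (Matrix.vecMulVec
            (fun m => cB * Echar d (β*m*m + γ*m + a*m))
            (star (fun m => cB * Echar d (β*m*m + γ*m + a*m))) ⊗ₖ
           Matrix.vecMulVec
            (fun n => cB * Echar d (q*n*n - a*n))
            (star (fun n => cB * Echar d (q*n*n - a*n)))) from
        Fintype.sum_equiv (zmodEquiv d) _ _ (fun i => rfl)]
      ext x y
      rw [hent x y, Matrix.sum_apply]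
      have hpure_entry : ∀ (f : ZMod d → ZMod d) (u u' : ZMod d),
          (Matrix.vecMulVec (fun m => cB * Echar d (f m))
            (star (fun m => cB * Echar d (f m)))) u u'
          = (d:ℂ)⁻¹ * Echar d (f u - f u') := by
        intro f u u'
        rw [Matrix.vecMulVec_apply, Pi.star_apply, star_mul', hstarcB, hstarE]
        calc cB * Echar d (f u) * (cB * Echar d (-(f u')))
            = (cB * cB) * (Echar d (f u) * Echar d (-(f u'))) := by ring
          _ = (d:ℂ)⁻¹ * Echar d (f u - f u') := by
              rw [hccB, ← Echar_add, sub_eq_add_neg]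
      have hRHS : ∀ a : ZMod d, ((((d:ℝ)⁻¹ : ℝ) : ℂ) •
          (Matrix.vecMulVec
            (fun m => cB * Echar d (β*m*m + γ*m + a*m))
            (star (fun m => cB * Echar d (β*m*m + γ*m + a*m))) ⊗ₖ
           Matrix.vecMulVec
            (fun n => cB * Echar d (q*n*n - a*n))
            (star (fun n => cB * Echar d (q*n*n - a*n))))) x y
          = (d:ℂ)⁻¹ * (d:ℂ)⁻¹ * (d:ℂ)⁻¹ *
            Echar d ((β*x.1*x.1 + γ*x.1 - (β*y.1*y.1 + γ*y.1)
              + (q*x.2*x.2 - q*y.2*y.2)) + (x.1 - y.1 - x.2 + y.2) * a) := by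
        intro a
        have hcast : (((d:ℝ)⁻¹ : ℝ) : ℂ) = (d:ℂ)⁻¹ := by push_cast; ring
        simp only [Matrix.smul_apply, Matrix.kroneckerMap_apply, hpure_entry, smul_eq_mul,
          hcast]
        rw [show (β*x.1*x.1 + γ*x.1 - (β*y.1*y.1 + γ*y.1)
              + (q*x.2*x.2 - q*y.2*y.2)) + (x.1 - y.1 - x.2 + y.2) * a
            = (β*x.1*x.1 + γ*x.1 + a*x.1 - (β*y.1*y.1 + γ*y.1 + a*y.1))
              + (q*x.2*x.2 - a*x.2 - (q*y.2*y.2 - a*y.2)) from by ring, Echar_add]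
        ring
      rw [Finset.sum_congr rfl fun a _ => hRHS a, ← Finset.mul_sum]
      have hsplit : (∑ a : ZMod d,
          Echar d ((β*x.1*x.1 + γ*x.1 - (β*y.1*y.1 + γ*y.1)
            + (q*x.2*x.2 - q*y.2*y.2)) + (x.1 - y.1 - x.2 + y.2) * a))
          = Echar d (β*x.1*x.1 + γ*x.1 - (β*y.1*y.1 + γ*y.1)
            + (q*x.2*x.2 - q*y.2*y.2)) *
            (if x.1 - y.1 - x.2 + y.2 = 0 then (d:ℂ) else 0) := by
        rw [Finset.sum_congr rfl fun a _ => Echar_add d _ _, ← Finset.mul_sum, Echar_sum]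
      rw [hsplit]
      -- now the LHS sum collapse
      have hj0 : s * (s⁻¹ * (x.2 - x.1 - t)) + t = x.2 - x.1 := by
        linear_combination (x.2 - x.1 - t) * mul_inv_cancel₀ hs
      have hiff : ∀ j : ZMod d, (x.2 = x.1 + (s*j + t)) ↔ j = s⁻¹ * (x.2 - x.1 - t) := by
        intro j
        constructor
        · intro h
          refine mul_left_cancel₀ hs ?_
          linear_combination -h - hj0
        · intro h
          rw [h]
          linear_combination -hj0
      rw [Finset.sum_congr rfl fun j _ => by rw [if_congr (hiff j) rfl rfl]]
      simp only [ite_mul, zero_mul, Finset.sum_ite_eq', Finset.mem_univ, if_true]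
      rw [hj0]
      by_cases hD : x.1 - y.1 - x.2 + y.2 = 0
      · have hy : y.2 = y.1 + (x.2 - x.1) := by linear_combination hD
        rw [if_pos hy, if_pos hD]
        have hEeq : Echar d (s⁻¹ * (x.2 - x.1 - t) * x.1) *
            Echar d (-(s⁻¹ * (x.2 - x.1 - t) * y.1))
            = Echar d (β*x.1*x.1 + γ*x.1 - (β*y.1*y.1 + γ*y.1)
              + (q*x.2*x.2 - q*y.2*y.2)) := by
          rw [← Echar_add]
          congr 1
          rw [hβ, hγ, hq, hy]
          field_simp
          ring
        rw [hEeq]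
        field_simp
      · have hyne : ¬ (y.2 = y.1 + (x.2 - x.1)) := fun h => hD (by linear_combination h)
        rw [if_neg hyne, if_neg hD]
        simp

  · rw [hB, Matrix.mul_assoc, ← Matrix.mul_assoc Bᴴ B Bᴴ, hBH, Matrix.one_mul]
  · rw [hB]
    exact (Matrix.posSemidef_self_mul_conjTranspose B).1
  · rw [hB, Matrix.rank_self_mul_conjTranspose, ← Matrix.rank_conjTranspose_mul_self, hBH,
      Matrix.rank_one, ZMod.card]
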